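/- Let Y₊, Y₋ ∈ R^{n×T}, U₋ ∈ R^{m×T} be data matrices, and suppose the true system matrices satisfy Y₊ − V₊ = [A B] [Y₋; U₋] − A V₋ + W₋ for some noise matrices W₋ ∈ M_w, V₋, V₊ ∈ M_v, and A V₋ ∈ M_{Av}, where M_w, M_v, M_{Av} are matrix zonotopes. If the stacked matrix [Y₋; U₋] ∈ R^{(n+m)×T} has a right inverse P (i.e., [Y₋; U₋] P = I), then [A B] belongs to the matrix zonotope M_Σ = (Y₊ ⊕ (−M_w) ⊕ (−M_v) ⊕ M_{Av}) · P, where the product with P is applied elementwise to the center and generators. -/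

import Mathlib

open Matrix BigOperators

def zono {V : Type*} [AddCommGroup V] [Module ℝ V] {ι : Type*} [Fintype ι]
    (c : V) (g : ι → V) : Set V :=
  {x | ∃ β : ι → ℝ, (∀ i, |β i| ≤ 1) ∧ x = c + ∑ i, β i • g i}

/-- Any system matrix `[A B]` consistent with the noisy data and the noise bounds belongs
to the matrix zonotope `M_Σ = (Y₊ ⊕ (−M_w) ⊕ (−M_v) ⊕ M_{Av}) · P`, where `P` is a right
inverse of the stacked data matrix `[Y₋; U₋]`. -/
theorem system_matrix_in_M_sigma {n m T γw γv γa : ℕ}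
    (A : Matrix (Fin n) (Fin n) ℝ) (B : Matrix (Fin n) (Fin m) ℝ)
    (Yp Ym : Matrix (Fin n) (Fin T) ℝ) (Um : Matrix (Fin m) (Fin T) ℝ)
    (Wm Vm Vp : Matrix (Fin n) (Fin T) ℝ)
    (Cw : Matrix (Fin n) (Fin T) ℝ) (Gw : Fin γw → Matrix (Fin n) (Fin T) ℝ)
    (Cv : Matrix (Fin n) (Fin T) ℝ) (Gv : Fin γv → Matrix (Fin n) (Fin T) ℝ)
    (Ca : Matrix (Fin n) (Fin T) ℝ) (Ga : Fin γa → Matrix (Fin n) (Fin T) ℝ)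
    (P : Matrix (Fin T) (Fin n ⊕ Fin m) ℝ)
    (hdata : Yp - Vp =
      Matrix.fromCols A B * Matrix.fromRows Ym Um - A * Vm + Wm)
    (hW : Wm ∈ zono Cw Gw) (hVm : Vm ∈ zono Cv Gv) (hVp : Vp ∈ zono Cv Gv)
    (hAV : A * Vm ∈ zono Ca Ga)
    (hP : Matrix.fromRows Ym Um * P = 1) :
    Matrix.fromCols A B ∈
      zono ((Yp - Cw - Cv + Ca) * P)
        (Sum.elim (fun i => -(Gw i) * P)
          (Sum.elim (fun i => -(Gv i) * P) (fun i => Ga i * P))) := by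
  obtain ⟨bw, hbw, hWm⟩ := hW
  obtain ⟨bp, hbp, hVpe⟩ := hVp
  obtain ⟨ba, hba, hAVe⟩ := hAV
  refine ⟨Sum.elim bw (Sum.elim bp ba), ?_, ?_⟩
  · rintro (i | i | i) <;> simp [hbw, hbp, hba]
  · have h2 : Matrix.fromCols A B * Matrix.fromRows Ym Um
        = Yp - Vp + A * Vm - Wm := by rw [hdata]; abel
    have key : Matrix.fromCols A B = (Yp - Vp + A * Vm - Wm) * P := by
      rw [← h2, Matrix.mul_assoc, hP, Matrix.mul_one]
    rw [key, hWm, hVpe, hAVe]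
    simp only [Fintype.sum_sum_type, Sum.elim_inl, Sum.elim_inr,
      Matrix.add_mul, Matrix.sub_mul, Matrix.neg_mul, Matrix.sum_mul,
      Matrix.smul_mul, neg_smul, smul_neg, Finset.sum_neg_distrib]
    abel
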